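/- arXiv:1810.02299 — 2 statements merged into one kernel-verified Lean document; each statement's English description precedes it below -/
import Mathlib

section
/- Let (b_n)_{n≥1} be a sequence of nonnegative reals with Σ_{n≥1} n·b_n < ∞. Then −Σ_{n≥1} b_n log b_n < ∞ (with the convention 0·log 0 = 0). -/
lemma neg_log_le_rpow {x : ℝ} (hx : 0 < x) : -Real.log x ≤ 4 * x ^ (-(1/4) : ℝ) := by
  have hp : (0:ℝ) < x ^ (-(1/4) : ℝ) := Real.rpow_pos_of_pos hx _
  have h1 : Real.log (x ^ (-(1/4) : ℝ)) ≤ x ^ (-(1/4) : ℝ) - 1 :=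
    Real.log_le_sub_one_of_pos hp
  rw [Real.log_rpow hx] at h1
  nlinarith

/-- If `b n ≥ 0` and `∑ n * b n < ∞`, then `−∑ b n * log (b n)`
is finite (convergent), with the convention `0 * log 0 = 0` (which holds in
Mathlib since `Real.log 0 = 0`). -/
theorem stmt2 (b : ℕ → ℝ) (hb : ∀ n, 0 ≤ b n)
    (hsum : Summable fun n : ℕ => (n : ℝ) * b n) :
    Summable fun n : ℕ => -(b n * Real.log (b n)) := by
  set g : ℕ → ℝ := fun n => 4 * (n : ℝ) ^ (-(3/2) : ℝ) + 2 * ((n : ℝ) * b n) with hg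
  have hgsum : Summable g := by
    apply Summable.add
    · exact (Real.summable_nat_rpow.2 (by norm_num)).mul_left 4
    · exact hsum.mul_left 2
  apply Summable.of_norm_bounded_eventually_nat hgsum
  have htend : Filter.Tendsto (fun n : ℕ => (n : ℝ) * b n) Filter.atTop (nhds 0) :=
    hsum.tendsto_atTop_zero
  have hev : ∀ᶠ n : ℕ in Filter.atTop, (n : ℝ) * b n ≤ 1 :=
    htend.eventually_le_const (by norm_num)
  filter_upwards [hev, Filter.eventually_ge_atTop 1] with n hn1 hn2
  have hn0 : (1:ℝ) ≤ (n:ℝ) := by exact_mod_cast hn2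
  have hnpos : (0:ℝ) < n := by linarith
  have hbn : b n ≤ 1 := by
    nlinarith [hb n]
  have hgpos1 : (0:ℝ) ≤ 4 * (n : ℝ) ^ (-(3/2) : ℝ) :=
    by positivity
  have hgpos2 : (0:ℝ) ≤ 2 * ((n : ℝ) * b n) :=
    mul_nonneg (by norm_num) (mul_nonneg hnpos.le (hb n))
  have hgn : g n = 4 * (n : ℝ) ^ (-(3/2) : ℝ) + 2 * ((n : ℝ) * b n) := rfl
  rcases eq_or_lt_of_le (hb n) with h0 | h0
  · rw [← h0, hgn]
    simp only [zero_mul, neg_zero, norm_zero]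
    linarith
  -- 0 < b n ≤ 1, so log (b n) ≤ 0
  have hlogle : Real.log (b n) ≤ 0 := Real.log_nonpos (le_of_lt h0) hbn
  have hnorm : ‖-(b n * Real.log (b n))‖ = b n * (-Real.log (b n)) := by
    rw [norm_neg, Real.norm_eq_abs, abs_of_nonpos (by nlinarith), neg_mul_eq_mul_neg]
  rw [hnorm]
  by_cases hcase : b n ≤ (n : ℝ) ^ (-(2:ℝ) : ℝ)
  · -- small case
    have key : b n * (-Real.log (b n)) ≤ 4 * (b n) ^ ((3:ℝ)/4) := by
      have h1 : -Real.log (b n) ≤ 4 * (b n) ^ (-(1/4) : ℝ) := neg_log_le_rpow h0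
      have h2 : b n * (b n) ^ (-(1/4) : ℝ) = (b n) ^ ((3:ℝ)/4) := by
        rw [← Real.rpow_one_add' (hb n) (by norm_num : (1:ℝ) + -(1/4) ≠ 0)]
        norm_num
      calc b n * (-Real.log (b n)) ≤ b n * (4 * (b n) ^ (-(1/4) : ℝ)) := by
            nlinarith [Real.rpow_pos_of_pos h0 (-(1/4):ℝ)]
        _ = 4 * (b n * (b n) ^ (-(1/4) : ℝ)) := by ring
        _ = 4 * (b n) ^ ((3:ℝ)/4) := by rw [h2]
    have h3 : (b n) ^ ((3:ℝ)/4) ≤ ((n : ℝ) ^ (-(2:ℝ))) ^ ((3:ℝ)/4) :=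
      Real.rpow_le_rpow (hb n) hcase (by norm_num)
    have h4 : ((n : ℝ) ^ (-(2:ℝ))) ^ ((3:ℝ)/4) = (n : ℝ) ^ (-(3/2) : ℝ) := by
      rw [← Real.rpow_mul (le_of_lt hnpos)]
      norm_num
    calc b n * (-Real.log (b n)) ≤ 4 * (b n) ^ ((3:ℝ)/4) := key
      _ ≤ 4 * (n : ℝ) ^ (-(3/2) : ℝ) := by rw [← h4]; linarith
      _ ≤ g n := by rw [hgn]; linarith
  · -- large case: b n > n^{-2}
    push_neg at hcase
    have hlog : -Real.log (b n) ≤ 2 * Real.log n := by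
      have := Real.log_le_log (Real.rpow_pos_of_pos hnpos _) (le_of_lt hcase)
      rw [Real.log_rpow hnpos] at this
      linarith
    have hlogn : Real.log n ≤ (n : ℝ) := by
      have := Real.log_le_sub_one_of_pos hnpos
      linarith
    have hlognn : 0 ≤ Real.log (n : ℝ) := Real.log_nonneg hn0
    calc b n * (-Real.log (b n)) ≤ b n * (2 * Real.log n) := by nlinarith
      _ ≤ b n * (2 * (n:ℝ)) := by nlinarith
      _ = 2 * ((n:ℝ) * b n) := by ring
      _ ≤ g n := by rw [hgn]; linarith
end

section
/- Let T be a measurable map of a measurable space, λ a probability measure, and suppose there is C_0 > 0 such that for every measurable set A and every n ≥ 0, C_0^{-1}·λ(A) ≤ λ(T^{-n}(A)) ≤ C_0·λ(A). Then any weak-* accumulation point μ of the Cesàro averages (1/n)Σ_{i=0}^{n−1} T^i_*λ is a T-invariant probability measure absolutely continuous with respect to λ, with Radon–Nikodym density ρ satisfying C_0^{-1} ≤ ρ ≤ C_0 λ-a.e. -/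
open MeasureTheory Filter Topology ENNReal

/-- If `C₀⁻¹ λ(A) ≤ λ(T⁻ⁿ A) ≤ C₀ λ(A)` for all measurable `A`
and all `n`, then any weak-* accumulation point `μ` of the Cesàro averages
`(1/n) ∑ T^i_* λ` is a `T`-invariant probability measure absolutely continuous
w.r.t. `λ` with density between `C₀⁻¹` and `C₀`. -/
theorem stmt3 {X : Type*} [MetricSpace X] [CompactSpace X]
    [MeasurableSpace X] [BorelSpace X]
    (T : X → X) (hT : Measurable T)
    (lam : Measure X) [IsProbabilityMeasure lam]
    (C₀ : ℝ) (hC₀ : 0 < C₀)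
    (hbd : ∀ (A : Set X), MeasurableSet A → ∀ n : ℕ,
      ENNReal.ofReal C₀⁻¹ * lam A ≤ lam (T^[n] ⁻¹' A) ∧
      lam (T^[n] ⁻¹' A) ≤ ENNReal.ofReal C₀ * lam A)
    (μ : Measure X)
    (φ : ℕ → ℕ) (hφ : StrictMono φ) (hφpos : ∀ n, 0 < φ n)
    (hacc : ∀ f : X → ℝ, Continuous f →
      Tendsto (fun n : ℕ =>
          ∫ x, f x ∂(((φ n : ℝ≥0∞))⁻¹ •
            ∑ i ∈ Finset.range (φ n), Measure.map (T^[i]) lam))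
        atTop (𝓝 (∫ x, f x ∂μ))) :
    IsProbabilityMeasure μ ∧ Measure.map T μ = μ ∧ μ ≪ lam ∧
      ∀ᵐ x ∂lam, ENNReal.ofReal C₀⁻¹ ≤ μ.rnDeriv lam x ∧
        μ.rnDeriv lam x ≤ ENNReal.ofReal C₀ := by
  have hTi : ∀ i : ℕ, Measurable (T^[i]) := fun i => hT.iterate i
  set ν : ℕ → Measure X := fun n => ((φ n : ℝ≥0∞))⁻¹ •
      ∑ i ∈ Finset.range (φ n), Measure.map (T^[i]) lam with hνdef
  have hacc' : ∀ f : X → ℝ, Continuous f →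
      Tendsto (fun n : ℕ => ∫ x, f x ∂(ν n)) atTop (𝓝 (∫ x, f x ∂μ)) := hacc
  clear_value ν
  have hφ0 : ∀ n, (φ n : ℝ≥0∞) ≠ 0 := by
    intro n
    exact_mod_cast (hφpos n).ne'
  have hφtop : ∀ n, (φ n : ℝ≥0∞) ≠ ∞ := fun n => ENNReal.natCast_ne_top _
  have hνapp : ∀ n (A : Set X), MeasurableSet A →
      ν n A = (φ n : ℝ≥0∞)⁻¹ * ∑ i ∈ Finset.range (φ n), lam (T^[i] ⁻¹' A) := by
    intro n A hA
    simp only [hνdef, Measure.smul_apply, Measure.finset_sum_apply, smul_eq_mul]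
    congr 1
    exact Finset.sum_congr rfl fun i _ => Measure.map_apply (hTi i) hA
  have hνuniv : ∀ n, ν n Set.univ = 1 := by
    intro n
    rw [hνapp n _ MeasurableSet.univ]
    simp only [Set.preimage_univ, measure_univ, Finset.sum_const, Finset.card_range,
      nsmul_eq_mul, mul_one]
    exact ENNReal.inv_mul_cancel (hφ0 n) (hφtop n)
  have hνprob : ∀ n, IsProbabilityMeasure (ν n) := fun n => ⟨hνuniv n⟩
  have hνbd : ∀ n (A : Set X), MeasurableSet A →
      ENNReal.ofReal C₀⁻¹ * lam A ≤ ν n A ∧ ν n A ≤ ENNReal.ofReal C₀ * lam A := by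
    intro n A hA
    rw [hνapp n A hA]
    constructor
    · have h1 : (φ n : ℝ≥0∞) * (ENNReal.ofReal C₀⁻¹ * lam A)
          ≤ ∑ i ∈ Finset.range (φ n), lam (T^[i] ⁻¹' A) := by
        calc (φ n : ℝ≥0∞) * (ENNReal.ofReal C₀⁻¹ * lam A)
            = ∑ _i ∈ Finset.range (φ n), ENNReal.ofReal C₀⁻¹ * lam A := by
              simp [Finset.sum_const, nsmul_eq_mul]
          _ ≤ _ := Finset.sum_le_sum fun i _ => (hbd A hA i).1
      calc ENNReal.ofReal C₀⁻¹ * lam A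
          = (φ n : ℝ≥0∞)⁻¹ * ((φ n : ℝ≥0∞) * (ENNReal.ofReal C₀⁻¹ * lam A)) := by
            rw [← mul_assoc, ENNReal.inv_mul_cancel (hφ0 n) (hφtop n), one_mul]
        _ ≤ _ := mul_le_mul_right h1 _
    · have h1 : ∑ i ∈ Finset.range (φ n), lam (T^[i] ⁻¹' A)
          ≤ (φ n : ℝ≥0∞) * (ENNReal.ofReal C₀ * lam A) := by
        calc ∑ i ∈ Finset.range (φ n), lam (T^[i] ⁻¹' A)
            ≤ ∑ _i ∈ Finset.range (φ n), ENNReal.ofReal C₀ * lam A :=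
              Finset.sum_le_sum fun i _ => (hbd A hA i).2
          _ = _ := by simp [Finset.sum_const, nsmul_eq_mul]
      calc (φ n : ℝ≥0∞)⁻¹ * ∑ i ∈ Finset.range (φ n), lam (T^[i] ⁻¹' A)
          ≤ (φ n : ℝ≥0∞)⁻¹ * ((φ n : ℝ≥0∞) * (ENNReal.ofReal C₀ * lam A)) :=
            mul_le_mul_right h1 _
        _ = ENNReal.ofReal C₀ * lam A := by
            rw [← mul_assoc, ENNReal.inv_mul_cancel (hφ0 n) (hφtop n), one_mul]
  -- μ is a probability measure
  have hμprob : IsProbabilityMeasure μ := by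
    have h1 := hacc' (fun _ => (1 : ℝ)) continuous_const
    have h2 : ∀ n, ∫ _x, (1 : ℝ) ∂(ν n) = 1 := by
      intro n
      haveI := hνprob n
      simp
    rw [tendsto_congr h2] at h1
    have h3 : ∫ _x, (1 : ℝ) ∂μ = 1 := tendsto_nhds_unique h1 tendsto_const_nhds
    have h4 : (μ Set.univ).toReal = 1 := by simpa [integral_const, Measure.real] using h3
    exact ⟨(ENNReal.toReal_eq_one_iff _).mp h4⟩
  haveI := hμprob
  haveI : ∀ n, IsProbabilityMeasure (ν n) := hνprob
  -- weak convergence in the `FiniteMeasure` sense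
  have hνfin : ∀ n, IsFiniteMeasure (ν n) := fun n =>
    ⟨by rw [hνuniv n]; exact one_lt_top⟩
  let Pn : ℕ → FiniteMeasure X := fun n => ⟨ν n, hνfin n⟩
  let P : FiniteMeasure X := ⟨μ, ⟨by rw [hμprob.measure_univ]; exact one_lt_top⟩⟩
  have htendP : Tendsto Pn atTop (𝓝 P) := by
    apply FiniteMeasure.tendsto_of_forall_integral_tendsto
    intro f
    exact hacc' f f.continuous
  -- portmanteau bounds
  have hclosed : ∀ F : Set X, IsClosed F → ENNReal.ofReal C₀⁻¹ * lam F ≤ μ F := by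
    intro F hF
    have h2 : limsup (fun n => ν n F) atTop ≤ μ F :=
      FiniteMeasure.limsup_measure_closed_le_of_tendsto htendP hF
    refine le_trans ?_ h2
    calc ENNReal.ofReal C₀⁻¹ * lam F
        = limsup (fun _ : ℕ => ENNReal.ofReal C₀⁻¹ * lam F) atTop := (limsup_const _).symm
      _ ≤ limsup (fun n => ν n F) atTop :=
          limsup_le_limsup (Eventually.of_forall fun n => (hνbd n F hF.measurableSet).1)
  have hopen : ∀ U : Set X, IsOpen U → μ U ≤ ENNReal.ofReal C₀ * lam U := by
    intro U hU
    have hcompl : limsup (fun n => ν n Uᶜ) atTop ≤ μ Uᶜ :=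
      FiniteMeasure.limsup_measure_closed_le_of_tendsto htendP hU.isClosed_compl
    have h2 : μ U ≤ liminf (fun n => ν n U) atTop :=
      le_measure_liminf_of_limsup_measure_compl_le (μs := fun n => ν n)
        hU.measurableSet hcompl
    calc μ U ≤ liminf (fun n => ν n U) atTop := h2
      _ ≤ liminf (fun _ : ℕ => ENNReal.ofReal C₀ * lam U) atTop :=
          liminf_le_liminf (Eventually.of_forall fun n => (hνbd n U hU.measurableSet).2)
      _ = ENNReal.ofReal C₀ * lam U := liminf_const _
  -- extension to all measurable sets via regularity
  have hC0ne0 : ENNReal.ofReal C₀ ≠ 0 := (ENNReal.ofReal_pos.mpr hC₀).ne'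
  have hCine0 : ENNReal.ofReal C₀⁻¹ ≠ 0 := (ENNReal.ofReal_pos.mpr (by positivity)).ne'
  have hub : ∀ A : Set X, MeasurableSet A → μ A ≤ ENNReal.ofReal C₀ * lam A := by
    intro A hA
    refine ENNReal.le_of_forall_pos_le_add fun ε hε _ => ?_
    set δ : ℝ≥0∞ := (ENNReal.ofReal C₀)⁻¹ * ε with hδ
    have hδ0 : δ ≠ 0 := by
      refine mul_ne_zero (ENNReal.inv_ne_zero.mpr ENNReal.ofReal_ne_top) ?_
      exact_mod_cast hε.ne'
    obtain ⟨U, hAU, hUo, hUlt⟩ := A.exists_isOpen_lt_add (measure_ne_top lam A) hδ0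
    calc μ A ≤ μ U := measure_mono hAU
      _ ≤ ENNReal.ofReal C₀ * lam U := hopen U hUo
      _ ≤ ENNReal.ofReal C₀ * (lam A + δ) := mul_le_mul_right hUlt.le _
      _ = ENNReal.ofReal C₀ * lam A + ENNReal.ofReal C₀ * δ := mul_add _ _ _
      _ ≤ ENNReal.ofReal C₀ * lam A + ε := by
          refine add_le_add_right (le_of_eq ?_) _
          rw [hδ, ← mul_assoc, ENNReal.mul_inv_cancel hC0ne0 ENNReal.ofReal_ne_top, one_mul]
  have hlb : ∀ A : Set X, MeasurableSet A → ENNReal.ofReal C₀⁻¹ * lam A ≤ μ A := by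
    intro A hA
    refine ENNReal.le_of_forall_pos_le_add fun ε hε _ => ?_
    set δ : ℝ≥0∞ := (ENNReal.ofReal C₀⁻¹)⁻¹ * ε with hδ
    have hδ0 : δ ≠ 0 := by
      refine mul_ne_zero (ENNReal.inv_ne_zero.mpr ENNReal.ofReal_ne_top) ?_
      exact_mod_cast hε.ne'
    obtain ⟨F, hFA, hFc, hFlt⟩ := hA.exists_isClosed_lt_add (measure_ne_top lam A) hδ0
    calc ENNReal.ofReal C₀⁻¹ * lam A
        ≤ ENNReal.ofReal C₀⁻¹ * (lam F + δ) := mul_le_mul_right hFlt.le _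
      _ = ENNReal.ofReal C₀⁻¹ * lam F + ENNReal.ofReal C₀⁻¹ * δ := mul_add _ _ _
      _ ≤ μ F + ε := by
          refine add_le_add (hclosed F hFc) (le_of_eq ?_)
          rw [hδ, ← mul_assoc, ENNReal.mul_inv_cancel hCine0 ENNReal.ofReal_ne_top, one_mul]
      _ ≤ μ A + ε := add_le_add_left (measure_mono hFA) _
  -- absolute continuity
  have habs : μ ≪ lam := by
    refine Measure.AbsolutelyContinuous.mk fun s hs h0 => ?_
    have := hub s hs
    rw [h0, mul_zero] at this
    exact le_antisymm this zero_le
  -- density bounds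
  have hdens : ∀ᵐ x ∂lam, ENNReal.ofReal C₀⁻¹ ≤ μ.rnDeriv lam x ∧
      μ.rnDeriv lam x ≤ ENNReal.ofReal C₀ := by
    have hup : μ.rnDeriv lam ≤ᵐ[lam] fun _ => ENNReal.ofReal C₀ := by
      refine ae_le_of_forall_setLIntegral_le_of_sigmaFinite (μ.measurable_rnDeriv lam)
        fun s hs _ => ?_
      rw [Measure.setLIntegral_rnDeriv habs, setLIntegral_const]
      exact hub s hs
    have hlo : (fun _ : X => ENNReal.ofReal C₀⁻¹) ≤ᵐ[lam] μ.rnDeriv lam := by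
      refine ae_le_of_forall_setLIntegral_le_of_sigmaFinite measurable_const
        fun s hs _ => ?_
      rw [Measure.setLIntegral_rnDeriv habs, setLIntegral_const]
      exact hlb s hs
    filter_upwards [hup, hlo] with x h1 h2
    exact ⟨h2, h1⟩
  -- comparison of measures
  have hμle : μ ≤ (ENNReal.ofReal C₀) • lam := by
    refine Measure.le_iff.mpr fun s hs => ?_
    simpa [Measure.smul_apply, smul_eq_mul] using hub s hs
  have hνle : ∀ n, ν n ≤ (ENNReal.ofReal C₀) • lam := fun n =>
    Measure.le_iff.mpr fun s hs => by
      simpa [Measure.smul_apply, smul_eq_mul] using (hνbd n s hs).2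
  -- integral bound against dominated measures
  have hbound : ∀ (ρ : Measure X), ρ ≤ (ENNReal.ofReal C₀) • lam → ∀ (g : X → ℝ),
      Integrable g lam → Integrable g ρ →
      |∫ x, g x ∂ρ| ≤ C₀ * ∫ x, |g x| ∂lam := by
    intro ρ hρ g hg _hgρ
    calc |∫ x, g x ∂ρ| ≤ ∫ x, |g x| ∂ρ := by
          simpa [Real.norm_eq_abs] using norm_integral_le_integral_norm (μ := ρ) g
      _ ≤ ∫ x, |g x| ∂((ENNReal.ofReal C₀) • lam) := by
          refine integral_mono_measure hρ (Eventually.of_forall fun x => abs_nonneg _) ?_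
          exact hg.abs.smul_measure ENNReal.ofReal_ne_top
      _ = C₀ * ∫ x, |g x| ∂lam := by
          rw [integral_smul_measure, ENNReal.toReal_ofReal hC₀.le, smul_eq_mul]
  -- convergence of measures of measurable sets
  have hsetconv : ∀ B : Set X, MeasurableSet B →
      Tendsto (fun n => (ν n B).toReal) atTop (𝓝 ((μ B).toReal)) := by
    intro B hB
    rw [Metric.tendsto_atTop]
    intro ε hε
    set ε' := ε / (3 * (C₀ + 1)) with hε'
    have hC1 : (0:ℝ) < C₀ + 1 := by linarith
    have hε'pos : 0 < ε' := by positivity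
    have heq : ε = 3 * (C₀ + 1) * ε' := by
      rw [hε']; field_simp
    set g : X → ℝ := Set.indicator B fun _ => (1 : ℝ) with hg
    have hgint : Integrable g lam := (integrable_const (1 : ℝ)).indicator hB
    obtain ⟨h, hhdist, _hhint⟩ := hgint.exists_boundedContinuous_integral_sub_le hε'pos
    have htendh := hacc' h h.continuous
    rw [Metric.tendsto_atTop] at htendh
    obtain ⟨N, hN⟩ := htendh ε' hε'pos
    refine ⟨N, fun n hn => ?_⟩
    haveI := hνprob n
    have hgν : Integrable g (ν n) := (integrable_const (1 : ℝ)).indicator hB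
    have hgμ : Integrable g μ := (integrable_const (1 : ℝ)).indicator hB
    have hdiff_int_lam : Integrable (fun x => g x - h x) lam := hgint.sub (h.integrable _)
    have e1 : ∫ x, g x ∂(ν n) = (ν n B).toReal := by
      simp [hg, integral_indicator_const _ hB, Measure.real]
    have e2 : ∫ x, g x ∂μ = (μ B).toReal := by
      simp [hg, integral_indicator_const _ hB, Measure.real]
    have k1 : |∫ x, g x ∂(ν n) - ∫ x, h x ∂(ν n)| ≤ C₀ * ∫ x, |g x - h x| ∂lam := by
      rw [← integral_sub hgν (h.integrable _)]
      exact hbound _ (hνle n) _ hdiff_int_lam (hgν.sub (h.integrable _))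
    have k3 : |∫ x, g x ∂μ - ∫ x, h x ∂μ| ≤ C₀ * ∫ x, |g x - h x| ∂lam := by
      rw [← integral_sub hgμ (h.integrable _)]
      exact hbound _ hμle _ hdiff_int_lam (hgμ.sub (h.integrable _))
    have k4 : ∫ x, |g x - h x| ∂lam ≤ ε' := by
      simpa [Real.norm_eq_abs] using hhdist
    have k2 : |∫ x, h x ∂(ν n) - ∫ x, h x ∂μ| < ε' := by
      have := hN n hn; rwa [Real.dist_eq] at this
    have hint_norm_nonneg : (0:ℝ) ≤ ∫ x, |g x - h x| ∂lam :=
      integral_nonneg fun x => abs_nonneg _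
    have b1 : |∫ x, g x ∂(ν n) - ∫ x, h x ∂(ν n)| ≤ C₀ * ε' :=
      k1.trans (mul_le_mul_of_nonneg_left k4 hC₀.le)
    have b3 : |∫ x, h x ∂μ - ∫ x, g x ∂μ| ≤ C₀ * ε' := by
      rw [abs_sub_comm]
      exact k3.trans (mul_le_mul_of_nonneg_left k4 hC₀.le)
    have expand : (ν n B).toReal - (μ B).toReal =
        (∫ x, g x ∂(ν n) - ∫ x, h x ∂(ν n)) + (∫ x, h x ∂(ν n) - ∫ x, h x ∂μ)
          + (∫ x, h x ∂μ - ∫ x, g x ∂μ) := by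
      rw [← e1, ← e2]; ring
    rw [Real.dist_eq, expand]
    refine lt_of_le_of_lt (abs_add_three _ _ _) ?_
    nlinarith [mul_pos hC₀ hε'pos]
  -- invariance
  have hkey : ∀ A : Set X, MeasurableSet A → μ (T ⁻¹' A) = μ A := by
    intro A hA
    have l1 := hsetconv A hA
    have l2 := hsetconv (T ⁻¹' A) (hT hA)
    set a : ℕ → ℝ := fun i => (lam (T^[i] ⁻¹' A)).toReal with ha
    have hident : ∀ n, (ν n (T ⁻¹' A)).toReal - (ν n A).toReal
        = (φ n : ℝ)⁻¹ * (a (φ n) - a 0) := by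
      intro n
      have e1 : ν n (T ⁻¹' A)
          = (φ n : ℝ≥0∞)⁻¹ * ∑ i ∈ Finset.range (φ n), lam (T^[i+1] ⁻¹' A) := by
        rw [hνapp n _ (hT hA)]
        congr 1
        refine Finset.sum_congr rfl fun i _ => ?_
        rw [← Set.preimage_comp, ← Function.iterate_succ']
      have t1 : (ν n (T ⁻¹' A)).toReal
          = (φ n : ℝ)⁻¹ * ∑ i ∈ Finset.range (φ n), a (i+1) := by
        rw [e1, ENNReal.toReal_mul, ENNReal.toReal_inv, ENNReal.toReal_natCast,
          ENNReal.toReal_sum (fun i _ => measure_ne_top lam _)]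
      have t2 : (ν n A).toReal = (φ n : ℝ)⁻¹ * ∑ i ∈ Finset.range (φ n), a i := by
        rw [hνapp n A hA, ENNReal.toReal_mul, ENNReal.toReal_inv, ENNReal.toReal_natCast,
          ENNReal.toReal_sum (fun i _ => measure_ne_top lam _)]
      have tel : ∑ i ∈ Finset.range (φ n), a (i+1) - ∑ i ∈ Finset.range (φ n), a i
          = a (φ n) - a 0 := by
        rw [← Finset.sum_sub_distrib]
        exact Finset.sum_range_sub a (φ n)
      rw [t1, t2, ← mul_sub, tel]
    have hbnd : ∀ n, |(ν n (T ⁻¹' A)).toReal - (ν n A).toReal| ≤ 2 * (φ n : ℝ)⁻¹ := by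
      intro n
      rw [hident n, abs_mul, abs_of_nonneg (inv_nonneg.mpr (Nat.cast_nonneg _))]
      have p1 : a (φ n) ≤ 1 := by
        have := prob_le_one (μ := lam) (s := T^[φ n] ⁻¹' A)
        simpa [ha] using ENNReal.toReal_mono ENNReal.one_ne_top this
      have p2 : a 0 ≤ 1 := by
        have := prob_le_one (μ := lam) (s := T^[0] ⁻¹' A)
        simpa [ha] using ENNReal.toReal_mono ENNReal.one_ne_top this
      have q1 : (0:ℝ) ≤ a (φ n) := ENNReal.toReal_nonneg
      have q2 : (0:ℝ) ≤ a 0 := ENNReal.toReal_nonneg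
      have h2 : |a (φ n) - a 0| ≤ 2 := by
        rw [abs_le]; constructor <;> nlinarith
      calc (φ n : ℝ)⁻¹ * |a (φ n) - a 0| ≤ (φ n : ℝ)⁻¹ * 2 :=
            mul_le_mul_of_nonneg_left h2 (inv_nonneg.mpr (Nat.cast_nonneg _))
        _ = 2 * (φ n : ℝ)⁻¹ := mul_comm _ _
    have hlim : Tendsto (fun n => 2 * ((φ n : ℝ))⁻¹) atTop (𝓝 0) := by
      have h1 : Tendsto (fun n => (φ n : ℝ)) atTop atTop :=
        tendsto_natCast_atTop_atTop.comp hφ.tendsto_atTop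
      simpa using h1.inv_tendsto_atTop.const_mul (2:ℝ)
    have hzero : Tendsto (fun n => (ν n (T ⁻¹' A)).toReal - (ν n A).toReal) atTop (𝓝 0) :=
      squeeze_zero_norm (fun n => by simpa [Real.norm_eq_abs] using hbnd n) hlim
    have l4 : Tendsto (fun n => (ν n (T ⁻¹' A)).toReal - (ν n A).toReal) atTop
        (𝓝 ((μ (T ⁻¹' A)).toReal - (μ A).toReal)) := l2.sub l1
    have heq0 : (μ (T ⁻¹' A)).toReal - (μ A).toReal = 0 := tendsto_nhds_unique l4 hzero
    exact (ENNReal.toReal_eq_toReal_iff' (measure_ne_top μ _) (measure_ne_top μ _)).mp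
      (sub_eq_zero.mp heq0)
  refine ⟨hμprob, ?_, habs, hdens⟩
  exact Measure.ext fun A hA => by rw [Measure.map_apply hT hA]; exact hkey A hA
end
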